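/- arXiv:1309.1628 — 2 statements merged into one kernel-verified Lean document; each statement's English description precedes it below -/
import Mathlib

section
/- Let $\mathcal{K}$ be a finite simplicial complex and let $T_1, \ldots, T_n$ be a sequence of top-dimensional simplices of $\mathcal{K}$. For $0 \le i \le n$ let $\mathcal{K}_i$ denote the subcomplex obtained from $\mathcal{K}$ by deleting the simplices $T_1, \ldots, T_i$ (retaining every face of a deleted simplex that is a face of some remaining simplex). Suppose that for every $i \in \{1, \ldots, n\}$ the subcomplex $\mathcal{K}_i \cap \bar T_i$ (the intersection of the closure of $T_i$ with the complex remaining after its removal) is acyclic. Then for every degree $m$, the reduced homology groups $\tilde H_m(\mathcal{K}_n)$ and $\tilde H_m(\mathcal{K})$ are isomorphic. -/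
open Finsupp

/-- The `i`-th smallest vertex of the finite set `s` (junk value `0` if out of range). -/
noncomputable def nthVertex (s : Finset ℕ) (i : ℕ) : ℕ := (s.sort (· ≤ ·)).getD i 0

/-- The augmented simplicial boundary of the single simplex `s`:
`∂ s = ∑ᵢ (-1)^i (s minus its i-th vertex)`.  For a vertex `{v}` this gives the chain
supported on `∅`, so we work with the augmented chain complex and its homology is
reduced homology. -/
noncomputable def simplexBoundary (s : Finset ℕ) : Finset ℕ →₀ ℤ :=
  ∑ i ∈ Finset.range s.card, Finsupp.single (s.erase (nthVertex s i)) ((-1 : ℤ) ^ i)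

/-- The (augmented) boundary operator on simplicial chains with `ℤ` coefficients. -/
noncomputable def simpBnd : (Finset ℕ →₀ ℤ) →ₗ[ℤ] (Finset ℕ →₀ ℤ) :=
  Finsupp.lsum ℤ fun s => LinearMap.toSpanSingleton ℤ _ (simplexBoundary s)

/-- The group of `n`-dimensional simplicial chains of `K`
(an `n`-simplex has `n + 1` vertices). -/
noncomputable def simpChains (K : Finset (Finset ℕ)) (n : ℕ) : Submodule ℤ (Finset ℕ →₀ ℤ) :=
  Submodule.span ℤ {x | ∃ s ∈ K, s.card = n + 1 ∧ x = Finsupp.single s 1}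

/-- The group of reduced `n`-cycles of `K`. -/
noncomputable def simpCycles (K : Finset (Finset ℕ)) (n : ℕ) : Submodule ℤ (Finset ℕ →₀ ℤ) :=
  simpChains K n ⊓ LinearMap.ker simpBnd

/-- The group of `n`-boundaries of `K`. -/
noncomputable def simpBoundaries (K : Finset (Finset ℕ)) (n : ℕ) : Submodule ℤ (Finset ℕ →₀ ℤ) :=
  (simpChains K (n + 1)).map simpBnd

/-- Reduced simplicial homology with integer coefficients of `K` in degree `n`. -/
abbrev reducedHomology (K : Finset (Finset ℕ)) (n : ℕ) :=
  ↥(simpCycles K n) ⧸ (simpBoundaries K n).comap (simpCycles K n).subtype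

/-- `K` is a (finite, abstract) simplicial complex: its members are nonempty finite sets
and it is closed under taking nonempty subsets (faces). -/
def IsComplex (K : Finset (Finset ℕ)) : Prop :=
  ∀ s ∈ K, s.Nonempty ∧ ∀ t, t ⊆ s → t.Nonempty → t ∈ K

/-- `K` is acyclic: it is nonempty and all of its reduced homology groups vanish. -/
def IsAcyclic (K : Finset (Finset ℕ)) : Prop :=
  K.Nonempty ∧ ∀ n, Subsingleton (reducedHomology K n)

/-- The closure of a simplex `V`: the simplicial complex consisting of `V` and
all of its (nonempty) faces. -/
def simplexClosure (V : Finset ℕ) : Finset (Finset ℕ) := V.powerset.erase ∅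

open Classical in
/-- Delete the top-dimensional cell `V` from the complex `X`: the remaining subcomplex
consists exactly of those simplices of `X` that are faces of some simplex of `X` not
contained in `V`; i.e. `V` is removed and every face of `V` that is a face of some
remaining simplex is retained. -/
noncomputable def deleteTop (X : Finset (Finset ℕ)) (V : Finset ℕ) : Finset (Finset ℕ) :=
  X.filter fun s => ∃ t ∈ X, s ⊆ t ∧ ¬ t ⊆ V

/-- Iteratively delete a list of top-dimensional cells from the complex `K`. -/
noncomputable def deleteSeq (K : Finset (Finset ℕ)) : List (Finset ℕ) → Finset (Finset ℕ)
  | [] => K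
  | V :: rest => deleteSeq (deleteTop K V) rest

/-- `T` is a top-dimensional simplex of `K`: it belongs to `K` and has maximal dimension. -/
def IsTopCell (K : Finset (Finset ℕ)) (T : Finset ℕ) : Prop :=
  T ∈ K ∧ ∀ s ∈ K, s.card ≤ T.card

lemma eraseIdx_comm {α : Type*} : ∀ (l : List α) (j d : ℕ),
    (l.eraseIdx (j+1+d)).eraseIdx j = (l.eraseIdx j).eraseIdx (j+d)
  | [], j, d => by simp
  | a :: t, 0, d => by
      have h1 : 0+1+d = d+1 := by omega
      rw [h1, List.eraseIdx_cons_succ, List.eraseIdx_cons_zero, List.eraseIdx_cons_zero]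
      simp
  | a :: t, j+1, d => by
      have h1 : j+1+1+d = (j+1+d)+1 := by omega
      have h2 : (j+1)+d = (j+d)+1 := by omega
      rw [h1, h2, List.eraseIdx_cons_succ, List.eraseIdx_cons_succ,
        List.eraseIdx_cons_succ, List.eraseIdx_cons_succ]
      have h3 : j+d+1 = j+1+d := by omega
      rw [h3, eraseIdx_comm t j d]

lemma toFinset_eraseIdx (l : List ℕ) (hnd : l.Nodup) (i : ℕ) (hi : i < l.length) :
    (l.eraseIdx i).toFinset = l.toFinset.erase l[i] := by
  ext x
  simp only [List.mem_toFinset, Finset.mem_erase, List.mem_eraseIdx_iff_getElem]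
  constructor
  · rintro ⟨j, hj, hji, rfl⟩
    exact ⟨fun h => hji ((List.Nodup.getElem_inj_iff hnd).mp h), List.getElem_mem _⟩
  · rintro ⟨hne, hx⟩
    obtain ⟨j, hj, rfl⟩ := List.getElem_of_mem hx
    exact ⟨j, hj, fun h => hne (by subst h; rfl), rfl⟩

lemma sb_sorted (l : List ℕ) (hl : l.Pairwise (· < ·)) :
    simplexBoundary l.toFinset =
      ∑ i ∈ Finset.range l.length, Finsupp.single ((l.eraseIdx i).toFinset) ((-1:ℤ)^i) := by
  have hnd : l.Nodup := hl.nodup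
  have hsort : l.toFinset.sort (· ≤ ·) = l :=
    (List.toFinset_sort _ hnd).mpr (hl.imp fun h => le_of_lt h)
  have hcard : l.toFinset.card = l.length := List.toFinset_card_of_nodup hnd
  unfold simplexBoundary nthVertex
  rw [hcard, hsort]
  refine Finset.sum_congr rfl fun i hi => ?_
  have hi' : i < l.length := Finset.mem_range.mp hi
  rw [List.getD_eq_getElem l 0 hi', toFinset_eraseIdx l hnd i hi']

lemma simpBnd_single (s : Finset ℕ) (c : ℤ) :
    simpBnd (Finsupp.single s c) = c • simplexBoundary s := by
  simp [simpBnd, Finsupp.lsum_single, LinearMap.toSpanSingleton_apply]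

lemma bb_sorted (l : List ℕ) (hl : l.Pairwise (· < ·)) :
    simpBnd (simplexBoundary l.toFinset) = 0 := by
  have hnd : l.Nodup := hl.nodup
  rw [sb_sorted l hl, map_sum]
  have hterm : ∀ i ∈ Finset.range l.length,
      simpBnd (Finsupp.single ((l.eraseIdx i).toFinset) ((-1:ℤ)^i)) =
      ∑ j ∈ Finset.range (l.length - 1),
        Finsupp.single (((l.eraseIdx i).eraseIdx j).toFinset) ((-1:ℤ)^i * (-1:ℤ)^j) := by
    intro i hi
    have hi' : i < l.length := Finset.mem_range.mp hi
    have hsl : (l.eraseIdx i).Pairwise (· < ·) := hl.sublist (List.eraseIdx_sublist l i)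
    have hlen : (l.eraseIdx i).length = l.length - 1 := by
      rw [List.length_eraseIdx]; simp [hi']
    rw [simpBnd_single, sb_sorted _ hsl, hlen, Finset.smul_sum]
    refine Finset.sum_congr rfl fun j hj => ?_
    rw [Finsupp.smul_single]
    norm_num
  rw [Finset.sum_congr rfl hterm, ← Finset.sum_product']
  refine Finset.sum_involution
    (fun p _ => if p.2 < p.1 then (p.2, p.1 - 1) else (p.2 + 1, p.1)) ?_ ?_ ?_ ?_
  · rintro ⟨i, j⟩ hp
    simp only [Finset.mem_product, Finset.mem_range] at hp
    by_cases h : j < i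
    · simp only [h, if_pos]
      have hfs : ((l.eraseIdx j).eraseIdx (i-1)).toFinset = ((l.eraseIdx i).eraseIdx j).toFinset := by
        have e1 : j+1+(i-1-j) = i := by omega
        have e2 : j+(i-1-j) = i-1 := by omega
        have hc := eraseIdx_comm l j (i-1-j)
        rw [e1, e2] at hc
        rw [hc]
      rw [hfs, ← Finsupp.single_add]
      obtain ⟨k, rfl⟩ : ∃ k, i = k + 1 := ⟨i-1, by omega⟩
      have : (-1:ℤ)^(k+1) * (-1)^j + (-1)^j * (-1)^(k+1-1) = 0 := by
        simp [pow_succ]; ring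
      rw [this, Finsupp.single_zero]
    · simp only [h, if_neg, not_false_iff]
      have hfs : ((l.eraseIdx (j+1)).eraseIdx i).toFinset = ((l.eraseIdx i).eraseIdx j).toFinset := by
        have e1 : i+1+(j-i) = j+1 := by omega
        have e2 : i+(j-i) = j := by omega
        have hc := eraseIdx_comm l i (j-i)
        rw [e1, e2] at hc
        rw [hc]
      rw [hfs, ← Finsupp.single_add]
      have : (-1:ℤ)^i * (-1)^j + (-1)^(j+1) * (-1)^i = 0 := by
        rw [pow_succ]; ring
      rw [this, Finsupp.single_zero]
  · rintro ⟨i, j⟩ hp _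
    by_cases h : j < i <;> simp [h, Prod.ext_iff] <;> omega
  · rintro ⟨i, j⟩ hp
    simp only [Finset.mem_product, Finset.mem_range] at hp ⊢
    by_cases h : j < i <;> simp [h] <;> omega
  · rintro ⟨i, j⟩ hp
    simp only [Finset.mem_product, Finset.mem_range] at hp
    by_cases h : j < i
    · simp only [h, if_pos]
      have : ¬ (i - 1 < j) := by omega
      simp only [this, if_neg, not_false_iff]
      ext <;> simp <;> omega
    · simp only [h, if_neg, not_false_iff]
      have : i < j + 1 := by omega
      simp only [this, if_pos]
      simp

lemma simpBnd_simpBnd (x : Finset ℕ →₀ ℤ) : simpBnd (simpBnd x) = 0 := by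
  have h : simpBnd.comp simpBnd = (0 : (Finset ℕ →₀ ℤ) →ₗ[ℤ] (Finset ℕ →₀ ℤ)) := by
    refine Finsupp.lhom_ext fun s c => ?_
    have : simpBnd (simpBnd (Finsupp.single s c)) = 0 := by
      rw [simpBnd_single, map_smul]
      have hs : (s.sort (· ≤ ·)).toFinset = s := Finset.sort_toFinset s _
      have : simpBnd (simplexBoundary s) = 0 := by
        rw [← hs]; exact bb_sorted _ (List.sortedLT_iff_pairwise.mp (Finset.sortedLT_sort s))
      rw [this, smul_zero]
    simpa using this
  exact LinearMap.congr_fun h x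

-- ====== stage 2 ======

def Fk (W : Finset (Finset ℕ)) : ℕ → Set (Finset ℕ)
  | 0 => {∅}
  | (k+1) => {s | s ∈ W ∧ s.card = k + 1}

noncomputable def Ch (W : Finset (Finset ℕ)) (k : ℕ) : Submodule ℤ (Finset ℕ →₀ ℤ) :=
  Finsupp.supported ℤ ℤ (Fk W k)

lemma mem_Ch {W : Finset (Finset ℕ)} {k : ℕ} {x : Finset ℕ →₀ ℤ} :
    x ∈ Ch W k ↔ ↑x.support ⊆ Fk W k := Finsupp.mem_supported ℤ x

lemma simpChains_eq (W : Finset (Finset ℕ)) (n : ℕ) : simpChains W n = Ch W (n+1) := by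
  rw [Ch, Finsupp.supported_eq_span_single, simpChains]
  congr 1
  ext x
  simp only [Set.mem_setOf_eq, Set.mem_image, Fk]
  constructor
  · rintro ⟨s, hs, hc, rfl⟩; exact ⟨s, ⟨hs, hc⟩, rfl⟩
  · rintro ⟨s, ⟨hs, hc⟩, rfl⟩; exact ⟨s, hs, hc, rfl⟩

lemma simpBnd_apply (x : Finset ℕ →₀ ℤ) :
    simpBnd x = x.sum fun s c => c • simplexBoundary s := by
  rw [simpBnd, Finsupp.lsum_apply]
  exact Finsupp.sum_congr fun s _ => rfl

lemma nthVertex_mem {s : Finset ℕ} {i : ℕ} (hi : i < s.card) : nthVertex s i ∈ s := by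
  unfold nthVertex
  have hlen : (s.sort (· ≤ ·)).length = s.card := Finset.length_sort _
  rw [List.getD_eq_getElem _ 0 (by omega)]
  rw [← Finset.mem_sort (α := ℕ) (· ≤ ·)]
  exact List.getElem_mem _

lemma supp_simplexBoundary {s t : Finset ℕ} (h : t ∈ (simplexBoundary s).support) :
    ∃ v ∈ s, t = s.erase v := by
  unfold simplexBoundary at h
  obtain ⟨i, hi, ht⟩ := Finset.mem_biUnion.mp (Finsupp.support_finset_sum h)
  have hi' : i < s.card := Finset.mem_range.mp hi
  have := Finsupp.support_single_subset ht
  simp only [Finset.mem_singleton] at this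
  exact ⟨nthVertex s i, nthVertex_mem hi', this⟩

lemma supp_simpBnd {x : Finset ℕ →₀ ℤ} {t : Finset ℕ} (h : t ∈ (simpBnd x).support) :
    ∃ s ∈ x.support, ∃ v ∈ s, t = s.erase v := by
  rw [simpBnd_apply] at h
  obtain ⟨s, hs, ht⟩ := Finset.mem_biUnion.mp (Finsupp.support_sum h)
  have ht' : t ∈ (simplexBoundary s).support := Finsupp.support_smul ht
  obtain ⟨v, hv, rfl⟩ := supp_simplexBoundary ht'
  exact ⟨s, hs, v, hv, rfl⟩

lemma bnd_mem_Ch {W : Finset (Finset ℕ)} (hW : IsComplex W) {k : ℕ} {x : Finset ℕ →₀ ℤ}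
    (hx : x ∈ Ch W (k+1)) : simpBnd x ∈ Ch W k := by
  rw [mem_Ch] at hx ⊢
  intro t ht
  obtain ⟨s, hs, v, hv, rfl⟩ := supp_simpBnd ht
  have hsF := hx hs
  simp only [Fk, Set.mem_setOf_eq] at hsF
  obtain ⟨hsW, hcard⟩ := hsF
  have hce : (s.erase v).card = k := by rw [Finset.card_erase_of_mem hv, hcard]; omega
  cases k with
  | zero =>
    have : s.erase v = ∅ := Finset.card_eq_zero.mp hce
    simp [Fk, this]
  | succ m =>
    have hne : (s.erase v).Nonempty := Finset.card_pos.mp (by omega)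
    exact ⟨(hW s hsW).2 _ (Finset.erase_subset _ _) hne, hce⟩

lemma Fk_mono {W₁ W₂ : Finset (Finset ℕ)} (h : W₁ ⊆ W₂) (k : ℕ) : Fk W₁ k ⊆ Fk W₂ k := by
  cases k with
  | zero => exact subset_rfl
  | succ m => intro s hs; exact ⟨h hs.1, hs.2⟩

lemma Ch_mono {W₁ W₂ : Finset (Finset ℕ)} (h : W₁ ⊆ W₂) (k : ℕ) : Ch W₁ k ≤ Ch W₂ k :=
  Finsupp.supported_mono (Fk_mono h k)

lemma Fk_inter (W₁ W₂ : Finset (Finset ℕ)) (k : ℕ) :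
    Fk (W₁ ∩ W₂) k = Fk W₁ k ∩ Fk W₂ k := by
  cases k with
  | zero => simp [Fk]
  | succ m =>
    ext s
    simp only [Fk, Set.mem_setOf_eq, Set.mem_inter_iff, Finset.mem_inter]
    tauto

lemma Ch_inter (W₁ W₂ : Finset (Finset ℕ)) (k : ℕ) :
    Ch (W₁ ∩ W₂) k = Ch W₁ k ⊓ Ch W₂ k := by
  ext x
  simp only [Ch, Submodule.mem_inf, Finsupp.mem_supported, Fk_inter, Set.subset_inter_iff]

lemma mem_simplexClosure {T s : Finset ℕ} : s ∈ simplexClosure T ↔ s ⊆ T ∧ s.Nonempty := by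
  simp [simplexClosure, Finset.mem_erase, Finset.mem_powerset, Finset.nonempty_iff_ne_empty]
  tauto

-- cone
noncomputable def coneMap (v : ℕ) : (Finset ℕ →₀ ℤ) →ₗ[ℤ] (Finset ℕ →₀ ℤ) :=
  Finsupp.lsum ℤ fun s => LinearMap.toSpanSingleton ℤ _
    (if v ∈ s then 0 else Finsupp.single (insert v s) 1)

lemma coneMap_single (v : ℕ) (s : Finset ℕ) (c : ℤ) :
    coneMap v (Finsupp.single s c) =
      c • (if v ∈ s then 0 else Finsupp.single (insert v s) 1) := by
  simp [coneMap, Finsupp.lsum_single, LinearMap.toSpanSingleton_apply]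

lemma cone_single_list (v : ℕ) (l : List ℕ) (hl : l.Pairwise (· < ·))
    (hv : ∀ w ∈ l, v ≤ w) :
    simpBnd (coneMap v (Finsupp.single l.toFinset 1)) +
      coneMap v (simpBnd (Finsupp.single l.toFinset 1)) = Finsupp.single l.toFinset 1 := by
  classical
  have hnd : l.Nodup := hl.nodup
  by_cases hvs : v ∈ l
  · -- v ∈ l, so l = v :: t
    obtain ⟨a, t, rfl⟩ : ∃ a t, l = a :: t := by
      cases l with
      | nil => simp at hvs
      | cons a t => exact ⟨a, t, rfl⟩
    have hat : ∀ w ∈ t, a < w := (List.pairwise_cons.mp hl).1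
    have hav : a = v := by
      rcases List.mem_cons.mp hvs with h | h
      · exact h.symm
      · exact absurd (hv a (by simp)) (not_le.mpr (hat v h))
    subst hav
    have hvt : a ∉ t := (List.nodup_cons.mp hnd).1
    have hvmem : a ∈ (a :: t).toFinset := by simp
    rw [coneMap_single, if_pos hvmem, smul_zero, map_zero, zero_add]
    simp only [simpBnd_single, one_smul]
    rw [sb_sorted _ hl, map_sum]
    have hlen : (a :: t).length = t.length + 1 := rfl
    rw [hlen, Finset.sum_range_succ']
    have h0 : coneMap a (Finsupp.single (((a :: t).eraseIdx 0).toFinset) ((-1:ℤ)^0)) =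
        Finsupp.single ((a :: t).toFinset) 1 := by
      rw [List.eraseIdx_cons_zero, pow_zero, coneMap_single,
        if_neg (by simpa using hvt), one_smul]
      simp
    have hsucc : ∀ i ∈ Finset.range t.length,
        coneMap a (Finsupp.single (((a :: t).eraseIdx (i+1)).toFinset) ((-1:ℤ)^(i+1))) = 0 := by
      intro i _
      rw [List.eraseIdx_cons_succ, coneMap_single, if_pos (by simp), smul_zero]
    rw [Finset.sum_congr rfl hsucc, Finset.sum_const_zero, zero_add, h0]
  · -- v ∉ l
    have hvlt : ∀ w ∈ l, v < w := fun w hw => lt_of_le_of_ne (hv w hw) (fun h => hvs (h ▸ hw))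
    have hsort : (v :: l).Pairwise (· < ·) := List.pairwise_cons.mpr ⟨hvlt, hl⟩
    have hvs' : v ∉ l.toFinset := by simpa using hvs
    have hins : insert v l.toFinset = (v :: l).toFinset := by simp
    rw [coneMap_single, if_neg hvs', one_smul]
    simp only [simpBnd_single, one_smul]
    rw [hins, sb_sorted _ hsort, sb_sorted l hl, map_sum]
    have hlen : (v :: l).length = l.length + 1 := rfl
    rw [hlen, Finset.sum_range_succ']
    simp only [List.eraseIdx_cons_succ, List.eraseIdx_cons_zero, pow_zero]
    have hterm : ∀ i ∈ Finset.range l.length,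
        coneMap v (Finsupp.single ((l.eraseIdx i).toFinset) ((-1:ℤ)^i)) =
          Finsupp.single ((v :: l.eraseIdx i).toFinset) ((-1:ℤ)^i) := by
      intro i _
      have hvni : v ∉ (l.eraseIdx i).toFinset := by
        rw [List.mem_toFinset]
        exact fun h => hvs ((List.eraseIdx_sublist l i).mem h)
      rw [coneMap_single, if_neg hvni, Finsupp.smul_single]
      simp [List.toFinset_cons]
    rw [Finset.sum_congr rfl hterm]
    rw [add_comm _ (Finsupp.single l.toFinset ((1:ℤ))), add_assoc, ← Finset.sum_add_distrib]
    have hz : ∀ i ∈ Finset.range l.length,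
        (Finsupp.single ((v :: l.eraseIdx i).toFinset) ((-1:ℤ)^(i+1)) +
         Finsupp.single ((v :: l.eraseIdx i).toFinset) ((-1:ℤ)^i)) = 0 := by
      intro i _
      rw [← Finsupp.single_add]
      have : (-1:ℤ)^(i+1) + (-1)^i = 0 := by rw [pow_succ]; ring
      rw [this, Finsupp.single_zero]
    rw [Finset.sum_congr rfl hz, Finset.sum_const_zero, add_zero]

lemma cone_single (v : ℕ) (s : Finset ℕ) (hv : ∀ w ∈ s, v ≤ w) :
    simpBnd (coneMap v (Finsupp.single s 1)) + coneMap v (simpBnd (Finsupp.single s 1))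
      = Finsupp.single s 1 := by
  have hs : (s.sort (· ≤ ·)).toFinset = s := Finset.sort_toFinset s _
  rw [← hs]
  exact cone_single_list v _ (List.sortedLT_iff_pairwise.mp (Finset.sortedLT_sort s))
    (fun w hw => hv w (by rw [← hs, List.mem_toFinset]; exact hw))

-- ============ stage 3 ============

lemma cone_chain (v : ℕ) (x : Finset ℕ →₀ ℤ)
    (hx : ∀ t ∈ x.support, ∀ w ∈ t, v ≤ w) :
    simpBnd (coneMap v x) + coneMap v (simpBnd x) = x := by
  classical
  set L : (Finset ℕ →₀ ℤ) →ₗ[ℤ] (Finset ℕ →₀ ℤ) :=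
    simpBnd.comp (coneMap v) + (coneMap v).comp simpBnd with hL
  have key : ∀ t ∈ x.support, L (Finsupp.single t (x t)) = Finsupp.single t (x t) := by
    intro t ht
    have h1 : L (Finsupp.single t 1) = Finsupp.single t 1 := by
      simpa [hL, LinearMap.add_apply, LinearMap.comp_apply] using cone_single v t (hx t ht)
    have h2 : Finsupp.single t (x t) = (x t) • Finsupp.single t (1:ℤ) := by
      rw [Finsupp.smul_single, smul_eq_mul, mul_one]
    rw [h2, map_smul, h1]
  have hLx : L x = x := by
    conv_lhs => rw [← Finsupp.sum_single x, Finsupp.sum, map_sum]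
    conv_rhs => rw [← Finsupp.sum_single x, Finsupp.sum]
    exact Finset.sum_congr rfl key
  simpa [hL, LinearMap.add_apply, LinearMap.comp_apply] using hLx

lemma coneMap_apply (v : ℕ) (x : Finset ℕ →₀ ℤ) :
    coneMap v x = x.sum fun s c =>
      c • (if v ∈ s then 0 else Finsupp.single (insert v s) 1) := by
  rw [coneMap, Finsupp.lsum_apply]
  exact Finsupp.sum_congr fun s _ => rfl

lemma supp_coneMap {v : ℕ} {x : Finset ℕ →₀ ℤ} {t : Finset ℕ}
    (h : t ∈ (coneMap v x).support) :
    ∃ s ∈ x.support, v ∉ s ∧ t = insert v s := by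
  classical
  rw [coneMap_apply] at h
  obtain ⟨s, hs, ht⟩ := Finset.mem_biUnion.mp (Finsupp.support_sum h)
  by_cases hv : v ∈ s
  · simp [hv] at ht
  · refine ⟨s, hs, hv, ?_⟩
    rw [if_neg hv] at ht
    have := Finsupp.support_single_subset (Finsupp.support_smul ht)
    simpa using this

lemma cone_acyclic (T : Finset ℕ) (hT : T.Nonempty) (k : ℕ) (x : Finset ℕ →₀ ℤ)
    (hx : x ∈ Ch (simplexClosure T) k) (hz : simpBnd x = 0) :
    ∃ b ∈ Ch (simplexClosure T) (k+1), simpBnd b = x := by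
  classical
  set v := T.min' hT with hvdef
  have hvT : v ∈ T := T.min'_mem hT
  have hsupp : ∀ t ∈ x.support, ∀ w ∈ t, v ≤ w := by
    intro t ht w hw
    have hm := mem_Ch.mp hx ht
    cases k with
    | zero => simp only [Fk, Set.mem_singleton_iff] at hm; subst hm; simp at hw
    | succ m =>
      obtain ⟨hmem, _⟩ := hm
      have hsub := (mem_simplexClosure.mp hmem).1
      exact T.min'_le w (hsub hw)
  refine ⟨coneMap v x, ?_, ?_⟩
  · rw [mem_Ch]
    intro t ht
    obtain ⟨s, hs, hvn, rfl⟩ := supp_coneMap ht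
    have hsF := mem_Ch.mp hx hs
    cases k with
    | zero =>
      simp only [Fk, Set.mem_singleton_iff] at hsF
      subst hsF
      exact ⟨mem_simplexClosure.mpr ⟨by simp [hvT], by simp⟩, by simp⟩
    | succ m =>
      obtain ⟨hmem, hcard⟩ := hsF
      have hsub := (mem_simplexClosure.mp hmem).1
      refine ⟨mem_simplexClosure.mpr ⟨Finset.insert_subset hvT hsub, ⟨v, by simp⟩⟩, ?_⟩
      rw [Finset.card_insert_of_notMem hvn, hcard]
  · have h := cone_chain v x hsupp
    rw [hz, map_zero, add_zero] at h
    exact h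

lemma acyclic_chain {W : Finset (Finset ℕ)} (hW : IsComplex W) (hA : IsAcyclic W)
    (k : ℕ) (x : Finset ℕ →₀ ℤ) (hx : x ∈ Ch W k) (hz : simpBnd x = 0) :
    ∃ b ∈ Ch W (k+1), simpBnd b = x := by
  classical
  cases k with
  | zero =>
    have hsupp : x.support ⊆ {∅} := by
      intro t ht
      have := mem_Ch.mp hx ht
      simp only [Fk, Set.mem_singleton_iff] at this
      simp [this]
    have hx0 : x = Finsupp.single ∅ (x ∅) := Finsupp.support_subset_singleton.mp hsupp
    obtain ⟨s₀, hs₀⟩ := hA.1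
    obtain ⟨u, hu⟩ := (hW s₀ hs₀).1
    have huW : ({u} : Finset ℕ) ∈ W :=
      (hW s₀ hs₀).2 {u} (Finset.singleton_subset_iff.mpr hu) (by simp)
    refine ⟨Finsupp.single {u} (x ∅), ?_, ?_⟩
    · rw [mem_Ch]
      intro t ht
      have := Finsupp.support_single_subset ht
      simp only [Finset.mem_singleton] at this
      subst this
      exact ⟨huW, by simp⟩
    · rw [simpBnd_single]
      have hsb : simplexBoundary {u} = Finsupp.single ∅ 1 := by
        unfold simplexBoundary nthVertex
        rw [Finset.card_singleton, Finset.sum_range_one]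
        simp [Finset.sort_singleton]
      rw [hsb, Finsupp.smul_single, smul_eq_mul, mul_one, ← hx0]
  | succ n =>
    have hxc : x ∈ simpChains W n := by rw [simpChains_eq]; exact hx
    have hx' : x ∈ simpCycles W n := ⟨hxc, LinearMap.mem_ker.mpr hz⟩
    haveI := hA.2 n
    have hq : (Submodule.Quotient.mk (⟨x, hx'⟩ : simpCycles W n) :
        reducedHomology W n) = 0 := Subsingleton.elim _ _
    rw [Submodule.Quotient.mk_eq_zero] at hq
    have hxB : x ∈ simpBoundaries W n := hq
    rw [simpBoundaries, simpChains_eq] at hxB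
    obtain ⟨b, hb, hbx⟩ := hxB
    exact ⟨b, hb, hbx⟩

-- complexes
lemma deleteTop_subset (X : Finset (Finset ℕ)) (V : Finset ℕ) : deleteTop X V ⊆ X :=
  Finset.filter_subset _ _

lemma mem_deleteTop {X : Finset (Finset ℕ)} {V s : Finset ℕ} :
    s ∈ deleteTop X V ↔ s ∈ X ∧ ∃ t ∈ X, s ⊆ t ∧ ¬ t ⊆ V := by
  simp [deleteTop]

lemma isComplex_deleteTop {X : Finset (Finset ℕ)} (hX : IsComplex X) (V : Finset ℕ) :
    IsComplex (deleteTop X V) := by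
  intro s hs
  rw [mem_deleteTop] at hs
  obtain ⟨hsX, t, htX, hst, htV⟩ := hs
  refine ⟨(hX s hsX).1, fun u hus hune => ?_⟩
  rw [mem_deleteTop]
  exact ⟨(hX s hsX).2 u hus hune, t, htX, hus.trans hst, htV⟩

lemma isComplex_closure (T : Finset ℕ) : IsComplex (simplexClosure T) := by
  intro s hs
  rw [mem_simplexClosure] at hs
  refine ⟨hs.2, fun t hts htne => ?_⟩
  rw [mem_simplexClosure]
  exact ⟨hts.trans hs.1, htne⟩

lemma isComplex_inter {W₁ W₂ : Finset (Finset ℕ)} (h1 : IsComplex W₁) (h2 : IsComplex W₂) :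
    IsComplex (W₁ ∩ W₂) := by
  intro s hs
  rw [Finset.mem_inter] at hs
  refine ⟨(h1 s hs.1).1, fun t hts htne => ?_⟩
  rw [Finset.mem_inter]
  exact ⟨(h1 s hs.1).2 t hts htne, (h2 s hs.2).2 t hts htne⟩

lemma closure_subset {X : Finset (Finset ℕ)} (hX : IsComplex X) {V : Finset ℕ} (hV : V ∈ X) :
    simplexClosure V ⊆ X := by
  intro s hs
  rw [mem_simplexClosure] at hs
  exact (hX V hV).2 s hs.1 hs.2

lemma Ch_cover {X : Finset (Finset ℕ)} (hX : IsComplex X) {V : Finset ℕ} (hV : V ∈ X) (k : ℕ) :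
    Ch X k = Ch (deleteTop X V) k ⊔ Ch (simplexClosure V) k := by
  apply le_antisymm
  · have hsub : Fk X k ⊆ Fk (deleteTop X V) k ∪ Fk (simplexClosure V) k := by
      cases k with
      | zero => intro s hs; exact Or.inl hs
      | succ m =>
        rintro s ⟨hsX, hcard⟩
        by_cases hsV : s ⊆ V
        · exact Or.inr ⟨mem_simplexClosure.mpr ⟨hsV, Finset.card_pos.mp (by omega)⟩, hcard⟩
        · exact Or.inl ⟨mem_deleteTop.mpr ⟨hsX, s, hsX, subset_rfl, hsV⟩, hcard⟩
    calc Ch X k ≤ Finsupp.supported ℤ ℤ (Fk (deleteTop X V) k ∪ Fk (simplexClosure V) k) :=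
          Finsupp.supported_mono hsub
      _ = _ := Finsupp.supported_union _ _
  · exact sup_le (Ch_mono (deleteTop_subset X V) k) (Ch_mono (closure_subset hX hV) k)

-- the single-step isomorphism
theorem step_iso (X : Finset (Finset ℕ)) (hX : IsComplex X) (V : Finset ℕ) (hV : V ∈ X)
    (hYA : IsAcyclic (deleteTop X V ∩ simplexClosure V)) (m : ℕ) :
    Nonempty (reducedHomology (deleteTop X V) m ≃ₗ[ℤ] reducedHomology X m) := by
  classical
  set Y := deleteTop X V with hYdef
  set A := simplexClosure V with hAdef
  have hYX : Y ⊆ X := deleteTop_subset X V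
  have hAX : A ⊆ X := closure_subset hX hV
  have hVne : V.Nonempty := (hX V hV).1
  have hYc : IsComplex Y := isComplex_deleteTop hX V
  have hAc : IsComplex A := isComplex_closure V
  have hYAc : IsComplex (Y ∩ A) := isComplex_inter hYc hAc
  have hZle : simpCycles Y m ≤ simpCycles X m := by
    unfold simpCycles
    exact inf_le_inf_right _ (by rw [simpChains_eq, simpChains_eq]; exact Ch_mono hYX _)
  have hBle : simpBoundaries Y m ≤ simpBoundaries X m := by
    unfold simpBoundaries
    rw [simpChains_eq, simpChains_eq]
    exact Submodule.map_mono (Ch_mono hYX _)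
  set θ : simpCycles Y m →ₗ[ℤ] simpCycles X m := Submodule.inclusion hZle with hθdef
  have hB : (simpBoundaries Y m).comap (simpCycles Y m).subtype ≤
      ((simpBoundaries X m).comap (simpCycles X m).subtype).comap θ := by
    intro z hz
    exact hBle hz
  set φ := Submodule.mapQ _ _ θ hB with hφdef
  -- surjectivity
  have hsurj : Function.Surjective φ := by
    intro c
    obtain ⟨z, rfl⟩ := Submodule.Quotient.mk_surjective _ c
    have hzc : (z : Finset ℕ →₀ ℤ) ∈ Ch X (m+1) := by
      rw [← simpChains_eq]; exact z.2.1
    have hzk : simpBnd (z : Finset ℕ →₀ ℤ) = 0 := LinearMap.mem_ker.mp z.2.2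
    rw [Ch_cover hX hV] at hzc
    obtain ⟨y, hy, a, ha, hyz⟩ := Submodule.mem_sup.mp hzc
    have hda : simpBnd a ∈ Ch A m := bnd_mem_Ch hAc ha
    have hdaeq : simpBnd a = - simpBnd y := by
      have h0 : simpBnd y + simpBnd a = 0 := by rw [← map_add, hyz, hzk]
      exact eq_neg_of_add_eq_zero_right h0
    have hdaY : simpBnd a ∈ Ch Y m := by
      rw [hdaeq]; exact neg_mem (bnd_mem_Ch hYc hy)
    have hdaYA : simpBnd a ∈ Ch (Y ∩ A) m := by
      rw [Ch_inter]; exact ⟨hdaY, hda⟩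
    have hdd : simpBnd (simpBnd a) = 0 := simpBnd_simpBnd a
    obtain ⟨a', ha', hda'⟩ := acyclic_chain hYAc hYA m (simpBnd a) hdaYA hdd
    have haA' : a' ∈ Ch A (m+1) := Ch_mono (Finset.inter_subset_right) _ ha'
    have haY' : a' ∈ Ch Y (m+1) := Ch_mono (Finset.inter_subset_left) _ ha'
    have haa : a - a' ∈ Ch A (m+1) := sub_mem ha haA'
    have hdaa : simpBnd (a - a') = 0 := by rw [map_sub, hda', sub_self]
    obtain ⟨b, hb, hdb⟩ := cone_acyclic V hVne (m+1) (a - a') haa hdaa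
    have hy' : y + a' ∈ Ch Y (m+1) := add_mem hy haY'
    have hdy' : simpBnd (y + a') = 0 := by
      rw [map_add, hda']
      rw [← map_add, hyz, hzk]
    have hy'c : y + a' ∈ simpCycles Y m :=
      ⟨by rw [simpChains_eq]; exact hy', LinearMap.mem_ker.mpr hdy'⟩
    refine ⟨Submodule.Quotient.mk (⟨y + a', hy'c⟩ : simpCycles Y m), ?_⟩
    rw [hφdef, Submodule.mapQ_apply]
    rw [Submodule.Quotient.eq]
    show (θ ⟨y + a', hy'c⟩ - z : simpCycles X m) ∈ _
    have hval : ((θ ⟨y + a', hy'c⟩ - z : simpCycles X m) : Finset ℕ →₀ ℤ)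
        = (y + a') - (z : Finset ℕ →₀ ℤ) := rfl
    show ((θ ⟨y + a', hy'c⟩ - z : simpCycles X m) : Finset ℕ →₀ ℤ) ∈ simpBoundaries X m
    rw [hval, ← hyz]
    have : y + a' - (y + a) = simpBnd (-b) := by
      rw [map_neg, hdb]; abel
    rw [this]
    rw [simpBoundaries, simpChains_eq]
    exact ⟨-b, neg_mem (Ch_mono hAX _ hb), rfl⟩
  -- injectivity
  have hinj : Function.Injective φ := by
    rw [← LinearMap.ker_eq_bot]
    rw [eq_bot_iff]
    intro u hu
    obtain ⟨w, rfl⟩ := Submodule.Quotient.mk_surjective _ u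
    have hu' : φ (Submodule.Quotient.mk w) = 0 := hu
    rw [hφdef, Submodule.mapQ_apply, Submodule.Quotient.mk_eq_zero] at hu'
    have hwB : (w : Finset ℕ →₀ ℤ) ∈ simpBoundaries X m := hu'
    rw [simpBoundaries, simpChains_eq] at hwB
    obtain ⟨c, hc, hcw⟩ := hwB
    rw [Ch_cover hX hV] at hc
    obtain ⟨cy, hcy, a, ha, hcc⟩ := Submodule.mem_sup.mp hc
    have hdaA : simpBnd a ∈ Ch A (m+1) := bnd_mem_Ch hAc ha
    have hdaY : simpBnd a ∈ Ch Y (m+1) := by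
      have heq : simpBnd a = (w : Finset ℕ →₀ ℤ) - simpBnd cy := by
        have h0 : simpBnd cy + simpBnd a = (w : Finset ℕ →₀ ℤ) := by
          rw [← map_add, hcc, hcw]
        exact eq_sub_of_add_eq' h0
      rw [heq]
      refine sub_mem ?_ (bnd_mem_Ch hYc hcy)
      rw [← simpChains_eq]; exact w.2.1
    have hdaYA : simpBnd a ∈ Ch (Y ∩ A) (m+1) := by rw [Ch_inter]; exact ⟨hdaY, hdaA⟩
    obtain ⟨a', ha', hda'⟩ := acyclic_chain hYAc hYA (m+1) (simpBnd a) hdaYA (simpBnd_simpBnd a)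
    have hwY : (w : Finset ℕ →₀ ℤ) ∈ simpBoundaries Y m := by
      rw [simpBoundaries, simpChains_eq]
      refine ⟨cy + a', add_mem hcy (Ch_mono Finset.inter_subset_left _ ha'), ?_⟩
      rw [map_add, hda', ← hcw, ← hcc, map_add]
    rw [Submodule.mem_bot]
    rw [Submodule.Quotient.mk_eq_zero]
    exact hwY
  exact ⟨LinearEquiv.ofBijective φ ⟨hinj, hsurj⟩⟩

theorem main_aux : ∀ (T : List (Finset ℕ)) (K : Finset (Finset ℕ)), IsComplex K →
    T.Nodup → (∀ i : Fin T.length, IsTopCell K (T.get i)) →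
    (∀ i : Fin T.length,
      IsAcyclic (deleteSeq K (T.take (↑i + 1)) ∩ simplexClosure (T.get i))) →
    ∀ m : ℕ, Nonempty (reducedHomology (deleteSeq K T) m ≃ₗ[ℤ] reducedHomology K m)
  | [], K, hK, _, _, _, m => ⟨LinearEquiv.refl ℤ _⟩
  | V :: rest, K, hK, hnodup, htop, hacyc, m => by
    have htop0 : IsTopCell K V := htop ⟨0, Nat.succ_pos _⟩
    have hVK : V ∈ K := htop0.1
    have hnodup' : rest.Nodup := (List.nodup_cons.mp hnodup).2
    have hVnotin : V ∉ rest := (List.nodup_cons.mp hnodup).1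
    have hK' : IsComplex (deleteTop K V) := isComplex_deleteTop hK V
    have htop' : ∀ i : Fin rest.length, IsTopCell (deleteTop K V) (rest.get i) := by
      intro i
      have hi : IsTopCell K (rest.get i) := htop ⟨i+1, Nat.succ_lt_succ i.isLt⟩
      constructor
      · rw [mem_deleteTop]
        have hW : rest.get i ∈ K := hi.1
        have hcards : (rest.get i).card = V.card :=
          le_antisymm (htop0.2 _ hW) (hi.2 V hVK)
        have hne : rest.get i ≠ V := by
          intro h
          exact hVnotin (h ▸ List.get_mem rest i)
        have hnsub : ¬ rest.get i ⊆ V := fun hsub =>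
          hne (Finset.eq_of_subset_of_card_le hsub (by rw [hcards]))
        exact ⟨hW, rest.get i, hW, subset_rfl, hnsub⟩
      · intro s hs
        exact hi.2 s (deleteTop_subset _ _ hs)
    have hacyc0 : IsAcyclic (deleteTop K V ∩ simplexClosure V) := hacyc ⟨0, Nat.succ_pos _⟩
    have hacyc' : ∀ i : Fin rest.length,
        IsAcyclic (deleteSeq (deleteTop K V) (rest.take (↑i + 1)) ∩
          simplexClosure (rest.get i)) := fun i =>
      hacyc ⟨i+1, Nat.succ_lt_succ i.isLt⟩
    obtain ⟨e1⟩ := main_aux rest (deleteTop K V) hK' hnodup' htop' hacyc' m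
    obtain ⟨e2⟩ := step_iso K hK V hVK hacyc0 m
    exact ⟨e1.trans e2⟩


/-- Let `K` be a finite simplicial complex and `T = [T₁, …, Tₙ]` a
sequence of (distinct) top-dimensional simplices of `K`.  Let `Kᵢ = deleteSeq K (T.take i)`
be the subcomplex obtained from `K` by deleting `T₁, …, Tᵢ` (retaining every face of a
deleted simplex that is a face of some remaining simplex).  If for every `i` the
subcomplex `Kᵢ ∩ closure Tᵢ` is acyclic, then for every degree `m` the reduced homology
groups of `Kₙ = deleteSeq K T` and of `K` are isomorphic. -/
theorem thinning_preserves_homology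
    (K : Finset (Finset ℕ)) (hK : IsComplex K)
    (T : List (Finset ℕ)) (hnodup : T.Nodup)
    (htop : ∀ i : Fin T.length, IsTopCell K (T.get i))
    (hacyc : ∀ i : Fin T.length,
      IsAcyclic (deleteSeq K (T.take (↑i + 1)) ∩ simplexClosure (T.get i)))
    (m : ℕ) :
    Nonempty (reducedHomology (deleteSeq K T) m ≃ₗ[ℤ] reducedHomology K m) :=
  main_aux T K hK hnodup htop hacyc m
end

section
/- Every finite simplicial complex $\mathcal{K}$ admits a skeleton: there exists a sequence $T_1, \ldots, T_n$ of top-dimensional simplices of $\mathcal{K}$, with $\mathcal{K}_i$ denoting the subcomplex obtained from $\mathcal{K}$ by deleting $T_1, \ldots, T_i$, such that (1) for every $i$ the subcomplex $\mathcal{K}_i \cap \bar T_i$ is acyclic, (2) no top-dimensional simplex $T$ of the final complex $S = \mathcal{K}_n$ has the property that $(S \setminus T) \cap \bar T$ is acyclic (i.e., the removal process has been carried out as long as possible), and consequently (3) the reduced homology groups of $S$ and of $\mathcal{K}$ are isomorphic in every degree. -/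
open Finsupp

namespace Skel


def sgn (s : Finset ℕ) (v : ℕ) : ℤ := (-1) ^ ((s.filter (· < v)).card)

lemma nth_eq (s : Finset ℕ) {i : ℕ} (hi : i < s.card) :
    nthVertex s i = (s.sort (· ≤ ·))[i]'(by rwa [Finset.length_sort]) := by
  rw [nthVertex, List.getD_eq_getElem _ _ (by rwa [Finset.length_sort])]

lemma nth_mem (s : Finset ℕ) {i : ℕ} (hi : i < s.card) : nthVertex s i ∈ s := by
  rw [nth_eq s hi]
  exact (Finset.mem_sort _).1 (List.getElem_mem _)

lemma sort_strictMono (s : Finset ℕ) {j k : ℕ} (hk : k < (s.sort (· ≤ ·)).length)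
    (hjk : j < k) :
    (s.sort (· ≤ ·))[j]'(by omega) < (s.sort (· ≤ ·))[k]'hk := by
  have hmono : StrictMono (s.sort (· ≤ ·)).get := (Finset.sortedLT_sort s).strictMono_get
  have := hmono (show (⟨j, by omega⟩ : Fin (s.sort (· ≤ ·)).length) < ⟨k, hk⟩ from hjk)
  simpa [List.get_eq_getElem] using this

lemma filter_lt_nth (s : Finset ℕ) {i : ℕ} (hi : i < s.card) :
    (s.filter (· < nthVertex s i)).card = i := by
  have hlen : (s.sort (· ≤ ·)).length = s.card := Finset.length_sort _
  have key : (Finset.range i).card = (s.filter (· < nthVertex s i)).card := by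
    apply Finset.card_bij (fun j hj => (s.sort (· ≤ ·))[j]'(by
      rw [Finset.mem_range] at hj; omega))
    · intro j hj
      rw [Finset.mem_range] at hj
      rw [Finset.mem_filter]
      refine ⟨(Finset.mem_sort _).1 (List.getElem_mem _), ?_⟩
      rw [nth_eq s hi]
      exact sort_strictMono s (by omega) (by omega)
    · intro a ha b hb h
      rw [Finset.mem_range] at ha hb
      by_contra hab
      rcases Nat.lt_or_ge a b with hlt | hge
      · exact absurd h (ne_of_lt (sort_strictMono s (by omega) hlt))
      · have : b < a := by omega
        exact absurd h.symm (ne_of_lt (sort_strictMono s (by omega) this))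
    · intro v hv
      rw [Finset.mem_filter] at hv
      obtain ⟨hv1, hv2⟩ := hv
      obtain ⟨j, hj, hjv⟩ := List.mem_iff_getElem.1 ((Finset.mem_sort (α := ℕ) (· ≤ ·)).2 hv1)
      refine ⟨j, Finset.mem_range.2 ?_, hjv⟩
      by_contra hij
      push_neg at hij
      have hle : nthVertex s i ≤ v := by
        rw [nth_eq s hi, ← hjv]
        rcases eq_or_lt_of_le hij with h | h
        · exact le_of_eq (by congr 1)
        · exact le_of_lt (sort_strictMono s hj h)
      omega
  simpa using key.symm

lemma simplexBoundary_eq (s : Finset ℕ) :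
    simplexBoundary s = ∑ v ∈ s, Finsupp.single (s.erase v) (sgn s v) := by
  rw [simplexBoundary]
  apply Finset.sum_bij (fun i hi => nthVertex s i)
  · intro i hi; exact nth_mem s (Finset.mem_range.1 hi)
  · intro a ha b hb h
    rw [Finset.mem_range] at ha hb
    have := congrArg (fun v => (s.filter (· < v)).card) h
    simpa [filter_lt_nth s ha, filter_lt_nth s hb] using this
  · intro v hv
    have : v ∈ s.sort (· ≤ ·) := (Finset.mem_sort _).2 hv
    obtain ⟨j, hj, hjv⟩ := List.mem_iff_getElem.1 this
    rw [Finset.length_sort] at hj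
    exact ⟨j, Finset.mem_range.2 hj, by rw [nth_eq s hj]; simp [List.get_eq_getElem, hjv]⟩
  · intro i hi
    rw [Finset.mem_range] at hi
    rw [sgn, filter_lt_nth s hi]

lemma sgn_erase_of_lt {s : Finset ℕ} {v w : ℕ} (hv : v ∈ s) (hvw : v < w) :
    sgn (s.erase v) w = -sgn s w := by
  have h1 : (s.erase v).filter (· < w) = (s.filter (· < w)).erase v := Finset.filter_erase _ _ _
  have hv' : v ∈ s.filter (· < w) := Finset.mem_filter.2 ⟨hv, hvw⟩
  have hc : (s.filter (· < w)).card = ((s.filter (· < w)).erase v).card + 1 := by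
    rw [Finset.card_erase_of_mem hv']
    have : 0 < (s.filter (· < w)).card := Finset.card_pos.2 ⟨v, hv'⟩
    omega
  rw [sgn, sgn, h1, hc, pow_succ]
  ring

lemma sgn_erase_of_not_lt {s : Finset ℕ} {v w : ℕ} (hvw : ¬ v < w) :
    sgn (s.erase v) w = sgn s w := by
  have h1 : (s.erase v).filter (· < w) = (s.filter (· < w)).erase v := Finset.filter_erase _ _ _
  rw [sgn, sgn, h1, Finset.erase_eq_of_notMem (by simp [hvw])]

lemma simpBnd_single (s : Finset ℕ) (k : ℤ) :
    simpBnd (Finsupp.single s k) = k • simplexBoundary s := by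
  rw [simpBnd, Finsupp.lsum_single, LinearMap.toSpanSingleton_apply]

lemma simpBnd_boundary (s : Finset ℕ) : simpBnd (simplexBoundary s) = 0 := by
  rw [simplexBoundary_eq, map_sum]
  have : ∀ v ∈ s, simpBnd (Finsupp.single (s.erase v) (sgn s v)) =
      ∑ w ∈ s, if w ≠ v then
        Finsupp.single ((s.erase v).erase w) (sgn s v * sgn (s.erase v) w) else 0 := by
    intro v hv
    rw [simpBnd_single, simplexBoundary_eq, Finset.smul_sum, ← Finset.filter_ne' s v,
      Finset.sum_filter]
    refine Finset.sum_congr rfl fun w hw => ?_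
    split
    · rw [Finsupp.smul_single, smul_eq_mul]
    · rfl
  rw [Finset.sum_congr rfl this, ← Finset.sum_product']
  apply Finset.sum_involution (fun p _ => p.swap)
  · rintro ⟨v, w⟩ hp
    simp only [Prod.swap]
    rcases eq_or_ne v w with rfl | hvw
    · simp
    · rw [if_pos (Ne.symm hvw), if_pos hvw, Finset.erase_right_comm]
      have key : sgn s v * sgn (s.erase v) w = -(sgn s w * sgn (s.erase w) v) := by
        rcases lt_or_gt_of_ne hvw with h | h
        · rw [sgn_erase_of_lt (by exact (Finset.mem_product.1 hp).1) h,
            sgn_erase_of_not_lt (not_lt.2 h.le)]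
          ring
        · rw [sgn_erase_of_lt (by exact (Finset.mem_product.1 hp).2) h,
            sgn_erase_of_not_lt (not_lt.2 h.le)]
          ring
      rw [key]
      rw [← Finsupp.single_add]
      simp
  · rintro ⟨v, w⟩ hp hne
    rcases eq_or_ne v w with rfl | hvw
    · simp at hne
    · simp [Prod.ext_iff, hvw, Ne.symm hvw]
  · rintro ⟨v, w⟩ _; rfl
  · rintro ⟨v, w⟩ hp
    rw [Finset.mem_product] at hp ⊢
    exact ⟨hp.2, hp.1⟩

lemma simpBnd_simpBnd (x : Finset ℕ →₀ ℤ) : simpBnd (simpBnd x) = 0 := by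
  have : (simpBnd.comp simpBnd : (Finset ℕ →₀ ℤ) →ₗ[ℤ] _) = 0 := by
    apply Finsupp.lhom_ext
    intro s k
    simp [LinearMap.comp_apply, simpBnd_single, map_smul, simpBnd_boundary]
  exact congrFun (congrArg (⇑) this) x



/-! ### Chains as supported finsupps -/

def chainSet (K : Finset (Finset ℕ)) (n : ℕ) : Set (Finset ℕ) := {s | s ∈ K ∧ s.card = n + 1}

lemma simpChains_eq (K : Finset (Finset ℕ)) (n : ℕ) :
    simpChains K n = Finsupp.supported ℤ ℤ (chainSet K n) := by
  rw [Finsupp.supported_eq_span_single, simpChains]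
  congr 1
  ext x
  constructor
  · rintro ⟨s, hs, hcard, rfl⟩
    exact ⟨s, ⟨hs, hcard⟩, rfl⟩
  · rintro ⟨s, ⟨hs, hcard⟩, rfl⟩
    exact ⟨s, hs, hcard, rfl⟩

lemma mem_simpChains {K : Finset (Finset ℕ)} {n : ℕ} {x : Finset ℕ →₀ ℤ} :
    x ∈ simpChains K n ↔ ∀ s ∈ x.support, s ∈ K ∧ s.card = n + 1 := by
  rw [simpChains_eq, Finsupp.mem_supported]
  constructor
  · intro h s hs; exact h hs
  · intro h s hs; exact h s hs

lemma single_mem_simpChains {K : Finset (Finset ℕ)} {n : ℕ} {s : Finset ℕ} (k : ℤ)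
    (hs : s ∈ K) (hcard : s.card = n + 1) : Finsupp.single s k ∈ simpChains K n := by
  rw [mem_simpChains]
  intro t ht
  have := Finsupp.support_single_subset ht
  simp only [Finset.mem_singleton] at this
  subst this; exact ⟨hs, hcard⟩

lemma simpChains_mono {A B : Finset (Finset ℕ)} (h : A ⊆ B) (n : ℕ) :
    simpChains A n ≤ simpChains B n := by
  intro x hx
  rw [mem_simpChains] at hx ⊢
  exact fun s hs => ⟨h (hx s hs).1, (hx s hs).2⟩

lemma simpChains_inter (A B : Finset (Finset ℕ)) (n : ℕ) :
    simpChains (A ∩ B) n = simpChains A n ⊓ simpChains B n := by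
  ext x
  simp only [Submodule.mem_inf, mem_simpChains, Finset.mem_inter]
  constructor
  · intro h
    exact ⟨fun s hs => ⟨(h s hs).1.1, (h s hs).2⟩, fun s hs => ⟨(h s hs).1.2, (h s hs).2⟩⟩
  · rintro ⟨h1, h2⟩ s hs
    exact ⟨⟨(h1 s hs).1, (h2 s hs).1⟩, (h1 s hs).2⟩

lemma simpBoundaries_mono {A B : Finset (Finset ℕ)} (h : A ⊆ B) (n : ℕ) :
    simpBoundaries A n ≤ simpBoundaries B n :=
  Submodule.map_mono (simpChains_mono h _)

lemma simpBoundaries_le_chains {K : Finset (Finset ℕ)} (hK : IsComplex K) (n : ℕ) :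
    simpBoundaries K n ≤ simpChains K n := by
  rw [simpBoundaries, Submodule.map_le_iff_le_comap, simpChains, Submodule.span_le]
  rintro x ⟨s, hs, hcard, rfl⟩
  simp only [SetLike.mem_coe, Submodule.mem_comap]
  rw [simpBnd_single, one_smul, simplexBoundary_eq]
  apply Submodule.sum_mem
  intro v hv
  apply single_mem_simpChains
  · exact ((hK s hs).2 (s.erase v) (Finset.erase_subset _ _)
      (Finset.card_pos.1 (by rw [Finset.card_erase_of_mem hv]; omega)))
  · rw [Finset.card_erase_of_mem hv, hcard]
    omega

lemma simpBnd_chains_zero {K : Finset (Finset ℕ)} {x : Finset ℕ →₀ ℤ}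
    (hx : x ∈ simpChains K 0) : ∃ k : ℤ, simpBnd x = Finsupp.single ∅ k := by
  have h1 : ∀ s : Finset ℕ, s.card = 1 → simplexBoundary s = Finsupp.single ∅ 1 := by
    intro s hs
    obtain ⟨v, rfl⟩ := Finset.card_eq_one.1 hs
    rw [simplexBoundary_eq, Finset.sum_singleton, Finset.erase_singleton]
    congr 1
    simp [sgn, Finset.filter_singleton]
  have hle : simpChains K 0 ≤
      Submodule.comap simpBnd (Submodule.span ℤ {Finsupp.single (∅ : Finset ℕ) (1 : ℤ)}) := by
    rw [simpChains, Submodule.span_le]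
    rintro y ⟨s, hs, hcard, rfl⟩
    simp only [SetLike.mem_coe, Submodule.mem_comap]
    rw [simpBnd_single, one_smul, h1 s hcard]
    exact Submodule.subset_span rfl
  obtain ⟨k, hk⟩ := Submodule.mem_span_singleton.1 (hle hx)
  refine ⟨k, ?_⟩
  rw [← hk, Finsupp.smul_single, smul_eq_mul, mul_one]


/-! ### Cone contraction -/

noncomputable def coneMap (v : ℕ) : (Finset ℕ →₀ ℤ) →ₗ[ℤ] (Finset ℕ →₀ ℤ) :=
  Finsupp.lsum ℤ fun s => LinearMap.toSpanSingleton ℤ _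
    (if v ∈ s then 0 else Finsupp.single (insert v s) 1)

lemma coneMap_single (v : ℕ) (s : Finset ℕ) (k : ℤ) :
    coneMap v (Finsupp.single s k) =
      if v ∈ s then 0 else Finsupp.single (insert v s) k := by
  rw [coneMap, Finsupp.lsum_single, LinearMap.toSpanSingleton_apply]
  split
  · simp
  · rw [Finsupp.smul_single, smul_eq_mul, mul_one]

lemma sgn_of_min {s : Finset ℕ} {v : ℕ} (h : ∀ x ∈ s, v ≤ x) : sgn s v = 1 := by
  rw [sgn]
  have : s.filter (· < v) = ∅ := by
    rw [Finset.filter_eq_empty_iff]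
    intro x hx
    exact not_lt.2 (h x hx)
  rw [this]
  simp

lemma cone_homotopy_single {v : ℕ} {s : Finset ℕ} (hvs : ∀ x ∈ s, v ≤ x) :
    simpBnd (coneMap v (Finsupp.single s (1:ℤ))) + coneMap v (simpBnd (Finsupp.single s (1:ℤ)))
      = Finsupp.single s 1 := by
  rw [simpBnd_single, one_smul, coneMap_single]
  by_cases hv : v ∈ s
  · rw [if_pos hv, map_zero, zero_add, simplexBoundary_eq, map_sum]
    have hterm : ∀ x ∈ s, coneMap v (Finsupp.single (s.erase x) (sgn s x)) =
        if x = v then Finsupp.single s 1 else 0 := by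
      intro x hx
      rw [coneMap_single]
      rcases eq_or_ne x v with rfl | hxv
      · rw [if_neg (Finset.notMem_erase _ _), if_pos rfl, Finset.insert_erase hv,
          sgn_of_min hvs]
      · rw [if_pos (Finset.mem_erase.2 ⟨Ne.symm hxv, hv⟩), if_neg hxv]
    rw [Finset.sum_congr rfl hterm, Finset.sum_ite_eq' s v (fun _ => Finsupp.single s 1),
      if_pos hv]
  · have hvlt : ∀ x ∈ s, v < x := fun x hx => lt_of_le_of_ne (hvs x hx) (fun h => hv (h ▸ hx))
    rw [if_neg hv, simpBnd_single, one_smul, simplexBoundary_eq,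
      Finset.sum_insert hv, Finset.erase_insert hv, sgn_of_min (by
        intro x hx
        rcases Finset.mem_insert.1 hx with rfl | hx
        · exact le_refl _
        · exact hvs x hx)]
    have h2 : ∀ x ∈ s, Finsupp.single ((insert v s).erase x) (sgn (insert v s) x) =
        -Finsupp.single (insert v (s.erase x)) (sgn s x) := by
      intro x hx
      have he : (insert v s).erase x = insert v (s.erase x) := by
        ext y
        simp only [Finset.mem_erase, Finset.mem_insert]
        constructor
        · rintro ⟨hyx, rfl | hy⟩
          · exact Or.inl rfl
          · exact Or.inr ⟨hyx, hy⟩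
        · rintro (rfl | ⟨hyx, hy⟩)
          · exact ⟨(hvlt x hx).ne, Or.inl rfl⟩
          · exact ⟨hyx, Or.inr hy⟩
      have hsgn : sgn (insert v s) x = -sgn s x := by
        rw [sgn, sgn, Finset.filter_insert, if_pos (hvlt x hx),
          Finset.card_insert_of_notMem (fun h => hv (Finset.mem_filter.1 h).1), pow_succ]
        ring
      rw [he, hsgn, Finsupp.single_neg]
    rw [Finset.sum_congr rfl h2, Finset.sum_neg_distrib, simplexBoundary_eq, map_sum]
    have h3 : ∀ x ∈ s, coneMap v (Finsupp.single (s.erase x) (sgn s x)) =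
        Finsupp.single (insert v (s.erase x)) (sgn s x) := by
      intro x hx
      rw [coneMap_single, if_neg (fun h => hv (Finset.mem_of_mem_erase h))]
    rw [Finset.sum_congr rfl h3]
    abel

lemma cone_homotopy {v : ℕ} (z : Finset ℕ →₀ ℤ)
    (hz : ∀ s ∈ z.support, ∀ x ∈ s, v ≤ x) :
    simpBnd (coneMap v z) + coneMap v (simpBnd z) = z := by
  calc simpBnd (coneMap v z) + coneMap v (simpBnd z)
      = z.sum fun s k => simpBnd (coneMap v (Finsupp.single s k))
          + coneMap v (simpBnd (Finsupp.single s k)) := by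
        conv_lhs => rw [← Finsupp.sum_single z]
        rw [map_finsuppSum, map_finsuppSum, map_finsuppSum, map_finsuppSum,
          ← Finsupp.sum_add]
    _ = z.sum fun s k => Finsupp.single s k := by
        apply Finsupp.sum_congr
        intro s hs
        have hk : ∀ f : (Finset ℕ →₀ ℤ) →ₗ[ℤ] (Finset ℕ →₀ ℤ),
            ∀ g : (Finset ℕ →₀ ℤ) →ₗ[ℤ] (Finset ℕ →₀ ℤ),
            f (g (Finsupp.single s (z s))) = (z s) • f (g (Finsupp.single s 1)) := by
          intro f g
          rw [show Finsupp.single s (z s) = (z s) • Finsupp.single s (1:ℤ) by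
            rw [Finsupp.smul_single, smul_eq_mul, mul_one], map_smul, map_smul]
        rw [hk, hk, ← smul_add, cone_homotopy_single (hz s hs), Finsupp.smul_single,
          smul_eq_mul, mul_one]
    _ = z := Finsupp.sum_single z

lemma cone_cycles_le_boundaries (V : Finset ℕ) (hV : V.Nonempty) (n : ℕ) :
    simpCycles (simplexClosure V) n ≤ simpBoundaries (simplexClosure V) n := by
  intro z hz
  obtain ⟨hzc, hzk⟩ := Submodule.mem_inf.1 hz
  rw [LinearMap.mem_ker] at hzk
  set v := V.min' hV with hv
  have hsupp : ∀ s ∈ z.support, ∀ x ∈ s, v ≤ x := by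
    intro s hs x hx
    have := (mem_simpChains.1 hzc s hs).1
    rw [simplexClosure, Finset.mem_erase, Finset.mem_powerset] at this
    exact V.min'_le x (this.2 hx)
  have hmain : simpBnd (coneMap v z) = z := by
    have := cone_homotopy z hsupp
    rwa [hzk, map_zero, add_zero] at this
  have hc : coneMap v z ∈ simpChains (simplexClosure V) (n + 1) := by
    rw [mem_simpChains]
    intro t ht
    have : t ∈ z.support.biUnion fun s =>
        ((if v ∈ s then 0 else Finsupp.single (insert v s) (z s)).support) := by
      refine Finset.mem_biUnion.2 ?_
      have h0 : coneMap v z = z.sum fun s k => if v ∈ s then 0 else Finsupp.single (insert v s) k := by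
        rw [coneMap, Finsupp.lsum_apply]
        apply Finsupp.sum_congr
        intro s _
        rw [LinearMap.toSpanSingleton_apply]
        split
        · simp
        · rw [Finsupp.smul_single, smul_eq_mul, mul_one]
      rw [h0] at ht
      have := Finsupp.support_sum ht
      exact Finset.mem_biUnion.1 this
    obtain ⟨s, hs, hts⟩ := Finset.mem_biUnion.1 this
    by_cases hvs : v ∈ s
    · rw [if_pos hvs] at hts; simp at hts
    · rw [if_neg hvs] at hts
      have := Finsupp.support_single_subset hts
      simp only [Finset.mem_singleton] at this
      subst this
      have hsV := (mem_simpChains.1 hzc s hs)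
      rw [simplexClosure, Finset.mem_erase, Finset.mem_powerset] at hsV
      constructor
      · rw [simplexClosure, Finset.mem_erase, Finset.mem_powerset]
        exact ⟨Finset.insert_ne_empty _ _, Finset.insert_subset (V.min'_mem hV) hsV.1.2⟩
      · rw [Finset.card_insert_of_notMem hvs, hsV.2]

  exact ⟨coneMap v z, hc, hmain⟩

/-! ### Homology machinery -/

lemma simplexBoundary_card_one {s : Finset ℕ} (hs : s.card = 1) :
    simplexBoundary s = Finsupp.single ∅ 1 := by
  obtain ⟨v, rfl⟩ := Finset.card_eq_one.1 hs
  rw [simplexBoundary_eq, Finset.sum_singleton, Finset.erase_singleton]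
  congr 1
  simp [sgn, Finset.filter_singleton]

lemma subsingleton_homology_iff (K : Finset (Finset ℕ)) (n : ℕ) :
    Subsingleton (reducedHomology K n) ↔ simpCycles K n ≤ simpBoundaries K n := by
  rw [Submodule.Quotient.subsingleton_iff, Submodule.comap_subtype_eq_top]

lemma exists_vertex {L : Finset (Finset ℕ)} (hL : IsComplex L) (hne : L.Nonempty) :
    ∃ u : ℕ, {u} ∈ L := by
  obtain ⟨s, hs⟩ := hne
  obtain ⟨⟨u, hu⟩, hcl⟩ := hL s hs
  exact ⟨u, hcl {u} (Finset.singleton_subset_iff.2 hu) (Finset.singleton_nonempty u)⟩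

lemma isComplex_inter {A B : Finset (Finset ℕ)} (hA : IsComplex A) (hB : IsComplex B) :
    IsComplex (A ∩ B) := by
  intro s hs
  rw [Finset.mem_inter] at hs
  exact ⟨(hA s hs.1).1, fun t hts htne => Finset.mem_inter.2
    ⟨(hA s hs.1).2 t hts htne, (hB s hs.2).2 t hts htne⟩⟩

lemma mem_deleteTop {X : Finset (Finset ℕ)} {V s : Finset ℕ} :
    s ∈ deleteTop X V ↔ s ∈ X ∧ ∃ t ∈ X, s ⊆ t ∧ ¬ t ⊆ V := by
  classical
  simp [deleteTop]

lemma deleteTop_subset (X : Finset (Finset ℕ)) (V : Finset ℕ) : deleteTop X V ⊆ X :=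
  Finset.filter_subset _ _

lemma isComplex_deleteTop {X : Finset (Finset ℕ)} (hX : IsComplex X) (V : Finset ℕ) :
    IsComplex (deleteTop X V) := by
  intro s hs
  rw [mem_deleteTop] at hs
  obtain ⟨hsX, t, htX, hst, htV⟩ := hs
  refine ⟨(hX s hsX).1, fun u hus hune => ?_⟩
  rw [mem_deleteTop]
  exact ⟨(hX s hsX).2 u hus hune, t, htX, hus.trans hst, htV⟩

lemma mem_closure_iff {V s : Finset ℕ} : s ∈ simplexClosure V ↔ s ⊆ V ∧ s ≠ ∅ := by
  rw [simplexClosure, Finset.mem_erase, Finset.mem_powerset]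
  tauto

lemma isComplex_closure (V : Finset ℕ) : IsComplex (simplexClosure V) := by
  intro s hs
  rw [mem_closure_iff] at hs
  refine ⟨Finset.nonempty_iff_ne_empty.2 hs.2, fun t hts htne => ?_⟩
  rw [mem_closure_iff]
  exact ⟨hts.trans hs.1, Finset.nonempty_iff_ne_empty.1 htne⟩

lemma closure_subset {X : Finset (Finset ℕ)} {V : Finset ℕ} (hX : IsComplex X) (hV : V ∈ X) :
    simplexClosure V ⊆ X := by
  intro s hs
  rw [mem_closure_iff] at hs
  exact (hX V hV).2 s hs.1 (Finset.nonempty_iff_ne_empty.2 hs.2)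

lemma subset_of_not_mem_deleteTop {X : Finset (Finset ℕ)} {V s : Finset ℕ}
    (hs : s ∈ X) (h : s ∉ deleteTop X V) : s ⊆ V := by
  by_contra hsV
  exact h (mem_deleteTop.2 ⟨hs, s, hs, subset_refl s, hsV⟩)

lemma chain_split {X : Finset (Finset ℕ)} (hX : IsComplex X) (V : Finset ℕ) {m : ℕ}
    {z : Finset ℕ →₀ ℤ} (hz : z ∈ simpChains X m) :
    ∃ a b, a ∈ simpChains (deleteTop X V) m ∧ b ∈ simpChains (simplexClosure V) m ∧
      z = a + b := by
  classical
  set a := z.filter (· ∈ deleteTop X V) with ha_def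
  refine ⟨a, z - a, ?_, ?_, by abel⟩
  · rw [mem_simpChains]
    intro s hs
    rw [ha_def, Finsupp.support_filter, Finset.mem_filter] at hs
    exact ⟨hs.2, (mem_simpChains.1 hz s hs.1).2⟩
  · rw [mem_simpChains]
    intro s hs
    have hsz : s ∈ z.support := by
      by_contra h
      have h1 : z s = 0 := Finsupp.notMem_support_iff.1 h
      have h2 : a s = 0 := by
        rw [ha_def]
        by_cases hsA : s ∈ deleteTop X V
        · rw [Finsupp.filter_apply_pos _ _ hsA, h1]
        · rw [Finsupp.filter_apply_neg _ _ hsA]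
      have : (z - a) s = 0 := by rw [Finsupp.sub_apply, h1, h2, sub_zero]
      exact Finsupp.mem_support_iff.1 hs this
    have hsA : s ∉ deleteTop X V := by
      intro h
      have : (z - a) s = 0 := by
        rw [Finsupp.sub_apply, ha_def, Finsupp.filter_apply_pos _ _ h, sub_self]
      exact Finsupp.mem_support_iff.1 hs this
    obtain ⟨hsX, hcard⟩ := mem_simpChains.1 hz s hsz
    refine ⟨mem_closure_iff.2 ⟨subset_of_not_mem_deleteTop hsX hsA, ?_⟩, hcard⟩
    exact Finset.nonempty_iff_ne_empty.1 (hX s hsX).1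

lemma chase_inj {X : Finset (Finset ℕ)} {V : Finset ℕ} (hX : IsComplex X)
    (hI : ∀ m, simpCycles (deleteTop X V ∩ simplexClosure V) m ≤
      simpBoundaries (deleteTop X V ∩ simplexClosure V) m)
    {n : ℕ} {z : Finset ℕ →₀ ℤ} (hzA : z ∈ simpChains (deleteTop X V) n)
    (hzX : z ∈ simpBoundaries X n) : z ∈ simpBoundaries (deleteTop X V) n := by
  obtain ⟨w, hw, hwz⟩ := Submodule.mem_map.1 hzX
  obtain ⟨a, b, ha, hb, hab⟩ := chain_split hX V hw
  have hA : IsComplex (deleteTop X V) := isComplex_deleteTop hX V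
  have hB : IsComplex (simplexClosure V) := isComplex_closure V
  have hbnd_a : simpBnd a ∈ simpChains (deleteTop X V) n :=
    simpBoundaries_le_chains hA n (Submodule.mem_map.2 ⟨a, ha, rfl⟩)
  have hbnd_b : simpBnd b ∈ simpChains (simplexClosure V) n :=
    simpBoundaries_le_chains hB n (Submodule.mem_map.2 ⟨b, hb, rfl⟩)
  have hbA : simpBnd b ∈ simpChains (deleteTop X V) n := by
    have h : simpBnd b = z - simpBnd a := by
      rw [← hwz, hab, map_add]; abel
    rw [h]
    exact Submodule.sub_mem _ hzA hbnd_a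
  have hbI : simpBnd b ∈ simpCycles (deleteTop X V ∩ simplexClosure V) n := by
    rw [simpCycles, Submodule.mem_inf, simpChains_inter, Submodule.mem_inf]
    exact ⟨⟨hbA, hbnd_b⟩, LinearMap.mem_ker.2 (simpBnd_simpBnd b)⟩
  obtain ⟨c, hc, hcb⟩ := Submodule.mem_map.1 (hI n hbI)
  refine Submodule.mem_map.2 ⟨a + c,
    Submodule.add_mem _ ha (simpChains_mono Finset.inter_subset_left _ hc), ?_⟩
  rw [map_add, hcb, ← map_add, ← hab, hwz]

lemma chase_surj {X : Finset (Finset ℕ)} {V : Finset ℕ} (hX : IsComplex X) (hV : V ∈ X)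
    (hI : ∀ m, simpCycles (deleteTop X V ∩ simplexClosure V) m ≤
      simpBoundaries (deleteTop X V ∩ simplexClosure V) m)
    (hIne : (deleteTop X V ∩ simplexClosure V).Nonempty)
    {n : ℕ} {z : Finset ℕ →₀ ℤ} (hz : z ∈ simpCycles X n) :
    ∃ z', z' ∈ simpCycles (deleteTop X V) n ∧ z - z' ∈ simpBoundaries X n := by
  obtain ⟨hzc, hzk⟩ := Submodule.mem_inf.1 hz
  rw [LinearMap.mem_ker] at hzk
  obtain ⟨a, b, ha, hb, hab⟩ := chain_split hX V hzc
  have hA : IsComplex (deleteTop X V) := isComplex_deleteTop hX V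
  have hB : IsComplex (simplexClosure V) := isComplex_closure V
  have hVne : V.Nonempty := (hX V hV).1
  have hbz : simpBnd b = -simpBnd a := by
    have h : simpBnd a + simpBnd b = 0 := by rw [← map_add, ← hab, hzk]
    exact eq_neg_of_add_eq_zero_right h
  have key : ∃ c, c ∈ simpChains (deleteTop X V ∩ simplexClosure V) n ∧
      simpBnd c = simpBnd b := by
    cases n with
    | zero =>
      obtain ⟨k, hk⟩ := simpBnd_chains_zero hb
      obtain ⟨u, hu⟩ := exists_vertex (isComplex_inter hA hB) hIne
      refine ⟨Finsupp.single {u} k, single_mem_simpChains k hu (by simp), ?_⟩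
      rw [simpBnd_single, hk, simplexBoundary_card_one (by simp), Finsupp.smul_single,
        smul_eq_mul, mul_one]
    | succ m =>
      have hbnd_a : simpBnd a ∈ simpChains (deleteTop X V) m :=
        simpBoundaries_le_chains hA m (Submodule.mem_map.2 ⟨a, ha, rfl⟩)
      have hbnd_b : simpBnd b ∈ simpChains (simplexClosure V) m :=
        simpBoundaries_le_chains hB m (Submodule.mem_map.2 ⟨b, hb, rfl⟩)
      have hbA : simpBnd b ∈ simpChains (deleteTop X V) m := by
        rw [hbz]
        exact Submodule.neg_mem _ hbnd_a
      have hbI : simpBnd b ∈ simpCycles (deleteTop X V ∩ simplexClosure V) m := by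
        rw [simpCycles, Submodule.mem_inf, simpChains_inter, Submodule.mem_inf]
        exact ⟨⟨hbA, hbnd_b⟩, LinearMap.mem_ker.2 (simpBnd_simpBnd b)⟩
      obtain ⟨c, hc, hcb⟩ := Submodule.mem_map.1 (hI m hbI)
      exact ⟨c, hc, hcb⟩
  obtain ⟨c, hc, hcb⟩ := key
  have hbc : b - c ∈ simpCycles (simplexClosure V) n := by
    rw [simpCycles, Submodule.mem_inf]
    constructor
    · exact Submodule.sub_mem _ hb (simpChains_mono Finset.inter_subset_right _ hc)
    · rw [LinearMap.mem_ker, map_sub, hcb, sub_self]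
  obtain ⟨d, hd, hdb⟩ := Submodule.mem_map.1 (cone_cycles_le_boundaries V hVne n hbc)
  refine ⟨a + c, ?_, ?_⟩
  · rw [simpCycles, Submodule.mem_inf]
    constructor
    · exact Submodule.add_mem _ ha (simpChains_mono Finset.inter_subset_left _ hc)
    · rw [LinearMap.mem_ker, map_add, hcb, ← map_add, ← hab, hzk]
  · refine Submodule.mem_map.2 ⟨d, simpChains_mono (closure_subset hX hV) _ hd, ?_⟩
    rw [hdb, hab]
    abel

lemma homology_iso {X : Finset (Finset ℕ)} {V : Finset ℕ} (hX : IsComplex X) (hV : V ∈ X)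
    (hac : IsAcyclic (deleteTop X V ∩ simplexClosure V)) (n : ℕ) :
    Nonempty (reducedHomology (deleteTop X V) n ≃ₗ[ℤ] reducedHomology X n) := by
  have hI : ∀ m, simpCycles (deleteTop X V ∩ simplexClosure V) m ≤
      simpBoundaries (deleteTop X V ∩ simplexClosure V) m :=
    fun m => (subsingleton_homology_iff _ m).1 (hac.2 m)
  have hle : simpCycles (deleteTop X V) n ≤ simpCycles X n :=
    le_inf (inf_le_left.trans (simpChains_mono (deleteTop_subset X V) n)) inf_le_right
  set f : simpCycles (deleteTop X V) n →ₗ[ℤ] reducedHomology X n :=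
    (Submodule.mkQ _).comp (Submodule.inclusion hle) with hf
  have hker : (simpBoundaries (deleteTop X V) n).comap (simpCycles (deleteTop X V) n).subtype
      ≤ LinearMap.ker f := by
    intro z hz
    rw [LinearMap.mem_ker, hf, LinearMap.comp_apply, Submodule.mkQ_apply,
      Submodule.Quotient.mk_eq_zero, Submodule.mem_comap]
    rw [Submodule.mem_comap] at hz
    exact simpBoundaries_mono (deleteTop_subset X V) n hz
  set φ := Submodule.liftQ _ f hker with hφ
  refine ⟨LinearEquiv.ofBijective φ ⟨?_, ?_⟩⟩
  · rw [← LinearMap.ker_eq_bot, Submodule.eq_bot_iff]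
    intro q hq
    obtain ⟨z, rfl⟩ := Submodule.Quotient.mk_surjective _ q
    rw [LinearMap.mem_ker, hφ, Submodule.liftQ_apply, hf, LinearMap.comp_apply,
      Submodule.mkQ_apply, Submodule.Quotient.mk_eq_zero, Submodule.mem_comap] at hq
    rw [Submodule.Quotient.mk_eq_zero, Submodule.mem_comap]
    exact chase_inj hX hI z.2.1 hq
  · intro q
    obtain ⟨z, rfl⟩ := Submodule.Quotient.mk_surjective _ q
    obtain ⟨z', hz', hdiff⟩ := chase_surj hX hV hI hac.1 z.2
    refine ⟨Submodule.Quotient.mk ⟨z', hz'⟩, ?_⟩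
    rw [hφ, Submodule.liftQ_apply, hf, LinearMap.comp_apply, Submodule.mkQ_apply,
      Submodule.Quotient.eq, Submodule.mem_comap]
    have hmem : -((z : Finset ℕ →₀ ℤ) - z') ∈ simpBoundaries X n := Submodule.neg_mem _ hdiff
    rw [neg_sub] at hmem
    simpa [Submodule.coe_inclusion] using hmem


/-! ### The deletion algorithm -/

lemma not_mem_deleteTop_self {X : Finset (Finset ℕ)} {V : Finset ℕ} (hV : IsTopCell X V) :
    V ∉ deleteTop X V := by
  intro h
  obtain ⟨-, t, htX, hVt, htV⟩ := mem_deleteTop.1 h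
  have : V = t := Finset.eq_of_subset_of_card_le hVt (hV.2 t htX)
  exact htV (this ▸ subset_refl V)

lemma card_deleteTop_lt {X : Finset (Finset ℕ)} {V : Finset ℕ} (hV : IsTopCell X V) :
    (deleteTop X V).card < X.card := by
  apply Finset.card_lt_card
  rw [Finset.ssubset_iff_of_subset (deleteTop_subset X V)]
  exact ⟨V, hV.1, not_mem_deleteTop_self hV⟩

lemma main_aux : ∀ (N : ℕ) (X : Finset (Finset ℕ)), X.card ≤ N → IsComplex X →
    ∃ T : List (Finset ℕ),
      (∀ i : Fin T.length, IsTopCell (deleteSeq X (T.take ↑i)) (T.get i)) ∧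
      (∀ i : Fin T.length,
        IsAcyclic (deleteSeq X (T.take (↑i + 1)) ∩ simplexClosure (T.get i))) ∧
      (∀ V : Finset ℕ, IsTopCell (deleteSeq X T) V →
        ¬ IsAcyclic (deleteTop (deleteSeq X T) V ∩ simplexClosure V)) ∧
      (∀ m : ℕ,
        Nonempty (reducedHomology (deleteSeq X T) m ≃ₗ[ℤ] reducedHomology X m)) := by
  intro N
  induction N with
  | zero =>
    intro X hcard hX
    have hXe : X = ∅ := Finset.card_eq_zero.1 (Nat.le_zero.1 hcard)
    refine ⟨[], fun i => i.elim0, fun i => i.elim0, ?_, fun m => ⟨LinearEquiv.refl ℤ _⟩⟩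
    intro V hV
    rw [show deleteSeq X [] = X from rfl, hXe] at hV
    exact absurd hV.1 (Finset.notMem_empty V)
  | succ N ih =>
    intro X hcard hX
    by_cases h : ∃ V, IsTopCell X V ∧ IsAcyclic (deleteTop X V ∩ simplexClosure V)
    · obtain ⟨V, hVtop, hVac⟩ := h
      have hlt : (deleteTop X V).card < X.card := card_deleteTop_lt hVtop
      obtain ⟨T', h1, h2, h3, h4⟩ := ih (deleteTop X V) (by omega) (isComplex_deleteTop hX V)
      refine ⟨V :: T', ?_, ?_, ?_, ?_⟩
      · intro i
        refine Fin.cases ?_ ?_ i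
        · exact hVtop
        · intro j
          exact h1 j
      · intro i
        refine Fin.cases ?_ ?_ i
        · exact hVac
        · intro j
          exact h2 j
      · exact h3
      · intro m
        obtain ⟨e1⟩ := h4 m
        obtain ⟨e2⟩ := homology_iso hX hVtop.1 hVac m
        exact ⟨e1.trans e2⟩
    · push_neg at h
      exact ⟨[], fun i => i.elim0, fun i => i.elim0, h, fun m => ⟨LinearEquiv.refl ℤ _⟩⟩


end Skel

/-- Every finite simplicial complex `K` admits a skeleton: there is a
sequence `T = [T₁, …, Tₙ]` of top-dimensional simplices (each top-dimensional in the
complex from which it is deleted), with `Kᵢ = deleteSeq K (T.take i)` the subcomplex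
obtained from `K` by deleting `T₁, …, Tᵢ`, such that
(1) for every `i` the subcomplex `Kᵢ ∩ closure Tᵢ` is acyclic,
(2) no top-dimensional simplex `V` of the final complex `S = Kₙ` has the property that
    `(S \ V) ∩ closure V` is acyclic (the removal process has been run as long as
    possible), and consequently
(3) the reduced homology groups of `S` and of `K` are isomorphic in every degree. -/
theorem skeleton_exists (K : Finset (Finset ℕ)) (hK : IsComplex K) :
    ∃ T : List (Finset ℕ),
      (∀ i : Fin T.length, IsTopCell (deleteSeq K (T.take ↑i)) (T.get i)) ∧
      (∀ i : Fin T.length,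
        IsAcyclic (deleteSeq K (T.take (↑i + 1)) ∩ simplexClosure (T.get i))) ∧
      (∀ V : Finset ℕ, IsTopCell (deleteSeq K T) V →
        ¬ IsAcyclic (deleteTop (deleteSeq K T) V ∩ simplexClosure V)) ∧
      (∀ m : ℕ,
        Nonempty (reducedHomology (deleteSeq K T) m ≃ₗ[ℤ] reducedHomology K m)) := by
  exact Skel.main_aux K.card K le_rfl hK
end
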